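/- Let μ be a Borel probability measure on ℝ^d with support κ. If 0 does not lie in the relative interior of the convex hull of κ, then there exists a unit vector h ∈ span(κ) ∩ (−cone κ)° such that μ({x : (h,x) ≥ 0}) = 1 and μ({x : (h,x) > 0}) > 0. -/

import Mathlib

open MeasureTheory

/-- Support of a Borel measure on a metric space. -/
def mSupport {E : Type*} [MeasurableSpace E] [PseudoMetricSpace E] (μ : Measure E) : Set E :=
  {x | ∀ ε > 0, 0 < μ (Metric.ball x ε)}

/-- `ν` is a regular conditional distribution of `ξ` given the sub-σ-algebra `H`. -/
def IsRCD {Ω E : Type*} [MeasurableSpace Ω] [MeasurableSpace E]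
    (H : MeasurableSpace Ω) (P : Measure Ω) (ξ : Ω → E) (ν : Ω → Measure E) : Prop :=
  (∀ ω, IsProbabilityMeasure (ν ω)) ∧
  (∀ B : Set E, MeasurableSet B → Measurable[H] fun ω => ν ω B) ∧
  (∀ B : Set E, MeasurableSet B →
    (fun ω => (ν ω B).toReal) =ᵐ[P] condExp H P (Set.indicator (ξ ⁻¹' B) fun _ => (1 : ℝ)))
/-- The conic hull of a set. -/
def coneHull {E : Type*} [AddCommMonoid E] [Module ℝ E] (s : Set E) : Set E :=
  {y | ∃ (c : ℝ) (x : E), 0 ≤ c ∧ x ∈ s ∧ y = c • x}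

open Set Filter Topology
open scoped ENNReal

lemma sep_lemma {F : Type*} [NormedAddCommGroup F] [InnerProductSpace ℝ F]
    [FiniteDimensional ℝ F] {s : Set F} (hne : s.Nonempty)
    (hspan : Submodule.span ℝ s = ⊤)
    (h0 : (0 : F) ∉ intrinsicInterior ℝ (convexHull ℝ s)) :
    ∃ h : F, (∀ x ∈ s, 0 ≤ (inner ℝ h x : ℝ)) ∧ ∃ x1 ∈ s, 0 < (inner ℝ h x1 : ℝ) := by
  set C := convexHull ℝ s with hC
  have hCconv : Convex ℝ C := convex_convexHull ℝ s
  by_cases hcl : (0 : F) ∈ closure C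
  · -- boundary case
    -- 0 ∈ affineSpan ℝ s
    have hclosed : IsClosed (affineSpan ℝ s : Set F) :=
      (affineSpan ℝ s).closed_of_finiteDimensional
    have h0span : (0 : F) ∈ affineSpan ℝ s := by
      have hsub : C ⊆ (affineSpan ℝ s : Set F) := convexHull_subset_affineSpan s
      exact hclosed.closure_subset_iff.2 hsub hcl
    -- affineSpan ℝ s = ⊤
    have htop : affineSpan ℝ s = ⊤ := by
      have hdir : (affineSpan ℝ s).direction = ⊤ := by
        rw [eq_top_iff, ← hspan, Submodule.span_le]
        intro x hx
        have := (AffineSubspace.vsub_right_mem_direction_iff_mem h0span x).2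
          (subset_affineSpan ℝ s hx)
        simpa using this
      rw [eq_top_iff]
      intro p _
      rw [← AffineSubspace.vsub_right_mem_direction_iff_mem h0span p, hdir]
      trivial
    have hint : (interior C).Nonempty := by
      rw [hCconv.interior_nonempty_iff_affineSpan_eq_top, affineSpan_convexHull]
      exact htop
    obtain ⟨y, hy⟩ := hint
    have h0int : (0 : F) ∉ interior C := fun hmem => h0 (interior_subset_intrinsicInterior hmem)
    obtain ⟨f, u, hfu, huf⟩ := geometric_hahn_banach_open hCconv.interior isOpen_interior
      (convex_singleton (0 : F)) (Set.disjoint_singleton_right.2 h0int)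
    have hu0 : u ≤ 0 := by simpa using huf 0 rfl
    have hfle : ∀ x ∈ C, f x ≤ 0 := by
      intro x hx
      have key : ∀ t ∈ Set.Ioc (0 : ℝ) 1, f (x + t • (y - x)) ≤ u := fun t ht =>
        (hfu _ (hCconv.add_smul_sub_mem_interior hx hy ht)).le
      have tend : Tendsto (fun t : ℝ => f (x + t • (y - x))) (𝓝[>] 0) (𝓝 (f x)) := by
        have cont : Continuous fun t : ℝ => f (x + t • (y - x)) := by
          exact f.continuous.comp (by continuity)
        have tend0 := cont.continuousWithinAt (s := Set.Ioi (0:ℝ)) (x := 0)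
        rw [ContinuousWithinAt] at tend0
        simpa using tend0
      have : f x ≤ u := le_of_tendsto tend
        (Filter.eventually_of_mem (Ioc_mem_nhdsGT_of_mem ⟨le_refl 0, one_pos⟩) key)
      linarith
    refine ⟨(InnerProductSpace.toDual ℝ F).symm (-f), fun x hx => ?_, ?_⟩
    · rw [InnerProductSpace.toDual_symm_apply]
      have := hfle x (subset_convexHull ℝ s hx)
      simpa using this
    · by_contra hcon
      push_neg at hcon
      have hCsub : C ⊆ {z | f z ≥ 0} := by
        apply convexHull_min _ (convex_halfSpace_ge ⟨f.map_add, f.map_smul⟩ 0)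
        intro x hx
        have := hcon x hx
        rw [InnerProductSpace.toDual_symm_apply] at this
        simpa using this
      have h1 : (0:ℝ) ≤ f y := hCsub (interior_subset hy)
      have h2 : f y < u := hfu y hy
      linarith
  · -- 0 outside closure
    obtain ⟨f, u, hfu, huf⟩ := geometric_hahn_banach_point_closed hCconv.closure
      isClosed_closure hcl
    rw [map_zero] at hfu
    obtain ⟨x1, hx1⟩ := hne
    refine ⟨(InnerProductSpace.toDual ℝ F).symm f, fun x hx => ?_, x1, hx1, ?_⟩
    · rw [InnerProductSpace.toDual_symm_apply]
      exact le_of_lt (lt_trans hfu (huf x (subset_closure (subset_convexHull ℝ s hx))))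
    · rw [InnerProductSpace.toDual_symm_apply]
      exact lt_trans hfu (huf x1 (subset_closure (subset_convexHull ℝ s hx1)))

theorem stmt_7 (d : ℕ) (μ : Measure (EuclideanSpace ℝ (Fin d))) [IsProbabilityMeasure μ]
    (h0 : (0 : EuclideanSpace ℝ (Fin d)) ∉
      intrinsicInterior ℝ (convexHull ℝ (mSupport μ))) :
    ∃ h : EuclideanSpace ℝ (Fin d), ‖h‖ = 1 ∧ h ∈ Submodule.span ℝ (mSupport μ) ∧
      (∀ y ∈ -coneHull (mSupport μ), (inner ℝ y h : ℝ) ≤ 0) ∧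
      μ {x | 0 ≤ (inner ℝ h x : ℝ)} = 1 ∧ 0 < μ {x | 0 < (inner ℝ h x : ℝ)} := by
  set E := EuclideanSpace ℝ (Fin d)
  set κ : Set E := mSupport μ with hκ
  -- the complement of the support is null
  have hnull : μ κᶜ = 0 := by
    apply measure_null_of_locally_null
    intro x hx
    simp only [hκ, mSupport, mem_compl_iff, mem_setOf_eq, not_forall] at hx
    change ¬ (∀ ε > 0, 0 < μ (Metric.ball x ε)) at hx
    push_neg at hx
    obtain ⟨ε, hε, hball⟩ := hx
    refine ⟨Metric.ball x ε, mem_nhdsWithin_of_mem_nhds (Metric.ball_mem_nhds x hε), ?_⟩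
    simpa using hball
  have hμκ : ∀ S : Set E, κ ⊆ S → μ S = 1 := by
    intro S hS
    refine le_antisymm prob_le_one ?_
    have huniv : (Set.univ : Set E) ⊆ S ∪ κᶜ := by
      intro z _
      by_cases hz : z ∈ κ
      · exact Or.inl (hS hz)
      · exact Or.inr hz
    calc (1 : ℝ≥0∞) = μ Set.univ := (measure_univ).symm
      _ ≤ μ (S ∪ κᶜ) := measure_mono huniv
      _ ≤ μ S + μ κᶜ := measure_union_le _ _
      _ = μ S := by rw [hnull, add_zero]
  have hκne : κ.Nonempty := by
    rw [Set.nonempty_iff_ne_empty]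
    intro hemp
    have : μ Set.univ = 0 := by
      rw [← Set.compl_empty, ← hemp]; exact hnull
    simp [measure_univ] at this
  -- pass to the span of κ
  set V : Submodule ℝ E := Submodule.span ℝ κ with hV
  set κ' : Set V := Subtype.val ⁻¹' κ with hκ'
  have himg : (Subtype.val : V → E) '' κ' = κ := by
    apply Set.image_preimage_eq_of_subset
    rw [Subtype.range_val]
    exact Submodule.subset_span
  have hspan' : Submodule.span ℝ κ' = ⊤ := by
    apply Submodule.map_injective_of_injective V.injective_subtype
    rw [Submodule.map_span, Submodule.map_top, Submodule.range_subtype]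
    rw [show (V.subtype : V → E) '' κ' = κ from himg]
  have hne' : κ'.Nonempty := by
    obtain ⟨x, hx⟩ := hκne
    exact ⟨⟨x, Submodule.subset_span hx⟩, hx⟩
  have h0' : (0 : V) ∉ intrinsicInterior ℝ (convexHull ℝ κ') := by
    intro hmem
    apply h0
    have himg2 : (Subtype.val : V → E) '' (intrinsicInterior ℝ (convexHull ℝ κ'))
        = intrinsicInterior ℝ (convexHull ℝ κ) := by
      have := V.subtypeₗᵢ.toAffineIsometry.image_intrinsicInterior (convexHull ℝ κ')
      have himgch : (Subtype.val : V → E) '' (convexHull ℝ κ') = convexHull ℝ κ := by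
        rw [show ((Subtype.val : V → E) '' (convexHull ℝ κ'))
            = (V.subtype : V →ₗ[ℝ] E) '' (convexHull ℝ κ') from rfl,
          V.subtype.image_convexHull]
        rw [show ((V.subtype : V →ₗ[ℝ] E) '' κ') = κ from himg]
      rw [show (⇑(V.subtypeₗᵢ.toAffineIsometry) : V → E) = Subtype.val from rfl] at this
      rw [himgch] at this
      exact this.symm ▸ rfl
    rw [← himg2]
    exact ⟨0, hmem, rfl⟩
  obtain ⟨h', hpos, x1', hx1', hstrict⟩ := sep_lemma hne' hspan' h0'
  have hne0 : h' ≠ 0 := by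
    intro heq
    rw [heq] at hstrict
    simp at hstrict
  have hnorm : (0:ℝ) < ‖(h' : E)‖ := by
    simpa using norm_pos_iff.2 hne0
  set c : ℝ := ‖(h' : E)‖⁻¹ with hc
  have hcpos : 0 < c := inv_pos.2 hnorm
  refine ⟨c • (h' : E), ?_, ?_, ?_, ?_, ?_⟩
  · rw [norm_smul, hc, Real.norm_eq_abs, abs_of_pos (inv_pos.2 hnorm),
      inv_mul_cancel₀ (ne_of_gt hnorm)]
  · exact Submodule.smul_mem _ _ h'.2
  -- key positivity facts
  · intro y hy
    rw [Set.mem_neg] at hy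
    obtain ⟨a, x, ha, hxκ, hyy⟩ := hy
    have hyeq : y = -(a • x) := by
      rw [← hyy]; simp
    have hx : 0 ≤ (inner ℝ h' (⟨x, Submodule.subset_span hxκ⟩ : V) : ℝ) :=
      hpos _ hxκ
    have hx2 : 0 ≤ (inner ℝ (h' : E) x : ℝ) := by
      rw [Submodule.coe_inner] at hx
      exact hx
    rw [hyeq, inner_neg_left]
    have hyx : (inner ℝ (a • x) (c • (h' : E)) : ℝ) = a * (c * inner ℝ (h' : E) x) := by
      rw [real_inner_smul_left, real_inner_smul_right, real_inner_comm]
    rw [hyx]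
    have : 0 ≤ a * (c * inner ℝ (h' : E) x) := by positivity
    linarith
  · apply hμκ
    intro x hxκ
    have hx : 0 ≤ (inner ℝ h' (⟨x, Submodule.subset_span hxκ⟩ : V) : ℝ) := hpos _ hxκ
    have hx2 : 0 ≤ (inner ℝ (h' : E) x : ℝ) := by
      rw [Submodule.coe_inner] at hx
      exact hx
    simp only [mem_setOf_eq, real_inner_smul_left]
    show 0 ≤ c * inner ℝ (h' : E) x
    positivity
  · have hx2 : 0 < (inner ℝ (h' : E) (x1' : E) : ℝ) := by
      rw [Submodule.coe_inner] at hstrict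
      exact hstrict
    set U : Set E := {x | 0 < (inner ℝ (c • (h' : E)) x : ℝ)} with hU
    have hUopen : IsOpen U := by
      apply isOpen_lt continuous_const
      exact Continuous.inner continuous_const continuous_id
    have hx1U : (x1' : E) ∈ U := by
      simp only [hU, mem_setOf_eq, real_inner_smul_left]
      positivity
    obtain ⟨ε, hε, hball⟩ := Metric.isOpen_iff.1 hUopen _ hx1U
    calc (0:ℝ≥0∞) < μ (Metric.ball (x1':E) ε) := hx1' ε hε
      _ ≤ μ U := measure_mono hball
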